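/- The Petersen graph does not admit a (1,2,2,2,2,2)-packing coloring, i.e. its vertex set cannot be partitioned into one independent set and five 2-packings. -/

import Mathlib

/-- An `S`-packing coloring: a map `c : V → Fin k` such that any two distinct
vertices with the same color `i` are at distance greater than `s i`. -/
def SPacking {V : Type*} (G : SimpleGraph V) (k : ℕ) (s : Fin k → ℕ) : Prop :=
  ∃ c : V → Fin k, ∀ u v : V, u ≠ v → c u = c v → G.Reachable u v → s (c u) < G.dist u v

/-- The subdivision of `G`: each edge is replaced by a path of length two
through a new (subdivision) vertex. -/
def Subdiv {V : Type*} (G : SimpleGraph V) : SimpleGraph (V ⊕ G.edgeSet) :=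
  SimpleGraph.fromRel (fun a b => ∃ (v : V) (e : G.edgeSet),
    a = Sum.inl v ∧ b = Sum.inr e ∧ v ∈ (e : Sym2 V))

/-- The Petersen graph as the Kneser graph K(5,2). -/
def Petersen : SimpleGraph {s : Finset (Fin 5) // s.card = 2} where
  Adj a b := Disjoint (a : Finset (Fin 5)) (b : Finset (Fin 5))
  symm := ⟨fun a b h => h.symm⟩
  loopless := ⟨fun a h => by
    have h1 := disjoint_self.mp h
    have h2 := a.2
    simp [h1] at h2⟩

abbrev PV := {s : Finset (Fin 5) // s.card = 2}

instance : DecidableRel Petersen.Adj := fun a b => by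
  unfold Petersen; infer_instance

lemma petersen_common : ∀ u v : PV, u ≠ v → ¬ Petersen.Adj u v →
    ∃ w : PV, Petersen.Adj u w ∧ Petersen.Adj w v := by decide

set_option maxRecDepth 10000 in
set_option synthInstance.maxHeartbeats 1000000 in
set_option synthInstance.maxSize 2048 in
set_option maxHeartbeats 2000000 in
lemma petersen_no_indep5 : ∀ a b c d e : PV,
    (¬Petersen.Adj a b ∧ ¬Petersen.Adj a c ∧ ¬Petersen.Adj a d ∧ ¬Petersen.Adj a e ∧
    ¬Petersen.Adj b c ∧ ¬Petersen.Adj b d ∧ ¬Petersen.Adj b e ∧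
    ¬Petersen.Adj c d ∧ ¬Petersen.Adj c e ∧ ¬Petersen.Adj d e) →
    (a = b ∨ a = c ∨ a = d ∨ a = e ∨ b = c ∨ b = d ∨ b = e ∨ c = d ∨ c = e ∨ d = e) := by
  decide

lemma petersen_card : Fintype.card PV = 10 := by decide

lemma petersen_dist_le_two {u v : PV} (h : u ≠ v) :
    Petersen.Reachable u v ∧ Petersen.dist u v ≤ 2 := by
  by_cases ha : Petersen.Adj u v
  · exact ⟨ha.reachable, le_trans (SimpleGraph.dist_le ha.toWalk) (by simp)⟩
  · obtain ⟨w, h1, h2⟩ := petersen_common u v h ha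
    exact ⟨⟨.cons h1 h2.toWalk⟩,
      le_trans (SimpleGraph.dist_le (.cons h1 h2.toWalk)) (by simp)⟩

theorem stmt_5 : ¬ SPacking Petersen 6 ![1, 2, 2, 2, 2, 2] := by
  rintro ⟨c, hc⟩
  -- fibers of nonzero colors have card ≤ 1
  have hfib : ∀ i : Fin 6, i ≠ 0 →
      (Finset.univ.filter (fun v : PV => c v = i)).card ≤ 1 := by
    intro i hi
    rw [Finset.card_le_one]
    intro u hu v hv
    simp only [Finset.mem_filter] at hu hv
    by_contra hne
    obtain ⟨hr, hd⟩ := petersen_dist_le_two hne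
    have := hc u v hne (hu.2.trans hv.2.symm) hr
    have h2 : (![1, 2, 2, 2, 2, 2] : Fin 6 → ℕ) (c u) = 2 := by
      rw [hu.2]; fin_cases i <;> first | exact absurd rfl hi | rfl
    omega
  have hsum : ∑ i : Fin 6, (Finset.univ.filter (fun v : PV => c v = i)).card = 10 := by
    rw [← petersen_card, ← Finset.card_univ]
    exact (Finset.card_eq_sum_card_fiberwise (fun v _ => Finset.mem_univ (c v))).symm
  have h5 : 5 ≤ (Finset.univ.filter (fun v : PV => c v = 0)).card := by
    have := hfib 1 (by decide)
    have := hfib 2 (by decide)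
    have := hfib 3 (by decide)
    have := hfib 4 (by decide)
    have := hfib 5 (by decide)
    rw [Fin.sum_univ_six] at hsum
    omega
  -- the color-0 class is independent
  have hindep : ∀ u v : PV, c u = 0 → c v = 0 → u ≠ v → ¬ Petersen.Adj u v := by
    intro u v hu hv hne hadj
    have := hc u v hne (hu.trans hv.symm) hadj.reachable
    have hd1 : Petersen.dist u v ≤ 1 := by
      simpa using SimpleGraph.dist_le hadj.toWalk
    rw [hu] at this
    simp at this
    omega
  -- extract five distinct color-0 vertices
  set t0 := Finset.univ.filter (fun v : PV => c v = 0) with ht0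
  have hmem : ∀ v ∈ t0, c v = 0 := fun v hv => (Finset.mem_filter.mp hv).2
  obtain ⟨a, ha⟩ := Finset.card_pos.mp (show 0 < t0.card by omega)
  obtain ⟨b, hb⟩ := Finset.card_pos.mp (show 0 < (t0.erase a).card by
    rw [Finset.card_erase_of_mem ha]; omega)
  obtain ⟨d, hd⟩ := Finset.card_pos.mp (show 0 < ((t0.erase a).erase b).card by
    rw [Finset.card_erase_of_mem hb, Finset.card_erase_of_mem ha]; omega)
  obtain ⟨e, he⟩ := Finset.card_pos.mp (show 0 < (((t0.erase a).erase b).erase d).card by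
    rw [Finset.card_erase_of_mem hd, Finset.card_erase_of_mem hb,
      Finset.card_erase_of_mem ha]; omega)
  obtain ⟨f, hf⟩ := Finset.card_pos.mp (show 0 < ((((t0.erase a).erase b).erase d).erase e).card by
    rw [Finset.card_erase_of_mem he, Finset.card_erase_of_mem hd,
      Finset.card_erase_of_mem hb, Finset.card_erase_of_mem ha]; omega)
  -- memberships and distinctness
  have hb' : b ∈ t0 := Finset.mem_of_mem_erase hb
  have hd' : d ∈ t0 := Finset.mem_of_mem_erase (Finset.mem_of_mem_erase hd)
  have he' : e ∈ t0 :=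
    Finset.mem_of_mem_erase (Finset.mem_of_mem_erase (Finset.mem_of_mem_erase he))
  have hf' : f ∈ t0 := Finset.mem_of_mem_erase (Finset.mem_of_mem_erase
    (Finset.mem_of_mem_erase (Finset.mem_of_mem_erase hf)))
  have nba : b ≠ a := Finset.ne_of_mem_erase hb
  have nda : d ≠ a := Finset.ne_of_mem_erase (Finset.mem_of_mem_erase hd)
  have ndb : d ≠ b := Finset.ne_of_mem_erase hd
  have nea : e ≠ a := Finset.ne_of_mem_erase
    (Finset.mem_of_mem_erase (Finset.mem_of_mem_erase he))
  have neb : e ≠ b := Finset.ne_of_mem_erase (Finset.mem_of_mem_erase he)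
  have ned : e ≠ d := Finset.ne_of_mem_erase he
  have nfa : f ≠ a := Finset.ne_of_mem_erase (Finset.mem_of_mem_erase
    (Finset.mem_of_mem_erase (Finset.mem_of_mem_erase hf)))
  have nfb : f ≠ b := Finset.ne_of_mem_erase
    (Finset.mem_of_mem_erase (Finset.mem_of_mem_erase hf))
  have nfd : f ≠ d := Finset.ne_of_mem_erase (Finset.mem_of_mem_erase hf)
  have nfe : f ≠ e := Finset.ne_of_mem_erase hf
  have key := petersen_no_indep5 a b d e f
    ⟨hindep a b (hmem a ha) (hmem b hb') nba.symm,
     hindep a d (hmem a ha) (hmem d hd') nda.symm,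
     hindep a e (hmem a ha) (hmem e he') nea.symm,
     hindep a f (hmem a ha) (hmem f hf') nfa.symm,
     hindep b d (hmem b hb') (hmem d hd') ndb.symm,
     hindep b e (hmem b hb') (hmem e he') neb.symm,
     hindep b f (hmem b hb') (hmem f hf') nfb.symm,
     hindep d e (hmem d hd') (hmem e he') ned.symm,
     hindep d f (hmem d hd') (hmem f hf') nfd.symm,
     hindep e f (hmem e he') (hmem f hf') nfe.symm⟩
  rcases key with h|h|h|h|h|h|h|h|h|h <;>
    first
    | exact nba h.symm | exact nda h.symm | exact nea h.symm | exact nfa h.symm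
    | exact ndb h.symm | exact neb h.symm | exact nfb h.symm
    | exact ned h.symm | exact nfd h.symm | exact nfe h.symm
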